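/- Let R be a commutative ring, I a finitely generated ideal of R, J an index type, and (A_j)_{j ∈ J} a family of commutative R-algebras. Then for every natural number n the canonical ring homomorphism (Π_{j ∈ J} A_j) / (Iⁿ · Π_{j ∈ J} A_j) → Π_{j ∈ J} (A_j / (Iⁿ · A_j)) is bijective, where Iⁿ · A denotes the ideal of the R-algebra A generated by the image of Iⁿ. -/

import Mathlib

/-- For a finitely generated ideal `I` of a commutative ring `R`, a family of commutative
`R`-algebras `(A j)` and `n : ℕ`, the canonical ring homomorphism
`(Π j, A j) / (Iⁿ · Π j, A j) → Π j, (A j / (Iⁿ · A j))` is bijective. -/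
theorem quotient_pow_pi_bijective
    {R : Type*} [CommRing R] (I : Ideal R) (hI : I.FG)
    {J : Type*} (A : J → Type*) [∀ j, CommRing (A j)] [∀ j, Algebra R (A j)] (n : ℕ) :
    Function.Bijective
      (Ideal.Quotient.lift ((I ^ n).map (algebraMap R (∀ j, A j)))
        (Pi.ringHom fun j =>
          (Ideal.Quotient.mk ((I ^ n).map (algebraMap R (A j)))).comp (Pi.evalRingHom A j))
        (by
          intro a ha
          have hj : ∀ j, a j ∈ (I ^ n).map (algebraMap R (A j)) := by
            intro j
            have h1 : Ideal.map (Pi.evalRingHom A j)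
                (Ideal.map (algebraMap R (∀ j, A j)) (I ^ n)) ≤
                Ideal.map (algebraMap R (A j)) (I ^ n) := by
              rw [Ideal.map_map]
              exact le_of_eq (congrArg (Ideal.map · (I ^ n)) rfl)
            exact h1 (Ideal.mem_map_of_mem _ ha)
          funext j
          exact (Ideal.Quotient.eq_zero_iff_mem).mpr (hj j))) := by
  constructor
  · apply RingHom.lift_injective_of_ker_le_ideal
    intro a ha
    have hj : ∀ j, a j ∈ (I ^ n).map (algebraMap R (A j)) := by
      intro j
      have := congrFun (RingHom.mem_ker.mp ha) j
      exact (Ideal.Quotient.eq_zero_iff_mem).mp this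
    obtain ⟨s, hs⟩ := Submodule.FG.pow hI n
    -- coefficients: for each j, a j is a combination of generators
    have key : ∀ j, ∃ l : R →₀ (A j), ↑l.support ⊆ (↑s : Set R) ∧
        (Finsupp.linearCombination (A j) (fun x : R => algebraMap R (A j) x)) l = a j := by
      intro j
      have : a j ∈ Ideal.span ((fun x : R => algebraMap R (A j) x) '' ↑s) := by
        have hjj := hj j
        rw [← hs] at hjj
        rw [← Ideal.map_span]; exact hjj
      exact (Finsupp.mem_span_image_iff_linearCombination (A j)).mp this
    choose l hl1 hl2 using key
    have : a = ∑ x ∈ s, algebraMap R (∀ j, A j) x * fun j => l j x := by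
      funext j
      rw [← hl2 j, Finsupp.linearCombination_apply, Finsupp.sum]
      rw [Finset.sum_apply]
      rw [Finset.sum_subset (hl1 j)]
      · simp [mul_comm, smul_eq_mul]
      · intro x _ hx
        simp [Finsupp.notMem_support_iff.mp hx]
    rw [this]
    exact Ideal.sum_mem _ fun x hx => Ideal.mul_mem_right _ _
      (Ideal.mem_map_of_mem _ (hs ▸ Ideal.subset_span hx))
  · apply Ideal.Quotient.lift_surjective_of_surjective
    intro b
    choose a ha using fun j => Ideal.Quotient.mk_surjective (b j)
    exact ⟨a, funext ha⟩
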